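/- Assume V : ℝ^d → ℝ is continuously differentiable with ‖∇V(x)‖ ≤ m for all x and ‖∇V(x) − ∇V(y)‖ ≤ m‖x − y‖ for all x, y (for some m > 0). Let (q(t), p(t)) be a solution of q̇ = p, ṗ = −∇V(q) defined on [0,T] with q(0) = q₀, p(0) = p₀. Then for every t ∈ [0,T]: ‖p(t) − p₀ + ∫₀ᵗ ∇V(q₀ + p₀ s) ds‖ ≤ m² t³ / 6, and ‖q(t) − q₀ − p₀ t − ∫₀ᵗ ∇V(q₀ + p₀ s)(s − t) ds‖ ≤ m² t⁴ / 24. -/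

import Mathlib

open Set MeasureTheory

/-- **First-order (Picard) approximation of the Hamiltonian free flight.**
If `‖∇V‖ ≤ m` everywhere and `∇V` is `m`-Lipschitz, then any solution of
`q' = p`, `p' = -∇V(q)` is approximated to order `m²` by the straight-line motion
corrected by the force integrated along the straight line. -/
theorem stmt_1 (d : ℕ) (hd : 1 ≤ d) (m : ℝ) (hm : 0 < m)
    (V : EuclideanSpace ℝ (Fin d) → ℝ) (hV : ContDiff ℝ 1 V)
    (hbound : ∀ x, ‖gradient V x‖ ≤ m)
    (hlip : ∀ x y, ‖gradient V x - gradient V y‖ ≤ m * ‖x - y‖)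
    (T : ℝ) (hT : 0 ≤ T)
    (q p : ℝ → EuclideanSpace ℝ (Fin d)) (q₀ p₀ : EuclideanSpace ℝ (Fin d))
    (hq : ∀ t ∈ Set.Icc (0:ℝ) T, HasDerivAt q (p t) t)
    (hp : ∀ t ∈ Set.Icc (0:ℝ) T, HasDerivAt p (-gradient V (q t)) t)
    (hq0 : q 0 = q₀) (hp0 : p 0 = p₀) :
    ∀ t ∈ Set.Icc (0:ℝ) T,
      ‖p t - p₀ + ∫ s in (0:ℝ)..t, gradient V (q₀ + s • p₀)‖ ≤ m^2 * t^3 / 6 ∧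
      ‖q t - q₀ - t • p₀ - ∫ s in (0:ℝ)..t, (s - t) • gradient V (q₀ + s • p₀)‖
        ≤ m^2 * t^4 / 24 := by
  set g : ℝ → EuclideanSpace ℝ (Fin d) := fun s => gradient V (q₀ + s • p₀) with hg_def
  have hlipc : Continuous (gradient V) := by
    have : LipschitzWith ⟨m, hm.le⟩ (gradient V) :=
      LipschitzWith.of_dist_le_mul fun x y => by
        rw [dist_eq_norm, dist_eq_norm]; exact hlip x y
    exact this.continuous
  have hgc : Continuous g := hlipc.comp (continuous_const.add (continuous_id.smul continuous_const))
  have hqc : ContinuousOn q (Icc 0 T) := fun s hs => (hq s hs).continuousAt.continuousWithinAt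
  have hpc : ContinuousOn p (Icc 0 T) := fun s hs => (hp s hs).continuousAt.continuousWithinAt
  have hgqc : ContinuousOn (fun s => gradient V (q s)) (Icc 0 T) :=
    hlipc.comp_continuousOn hqc
  -- inclusion helper
  have hsub : ∀ u ∈ Icc (0:ℝ) T, uIcc (0:ℝ) u ⊆ Icc 0 T := by
    intro u hu
    rw [uIcc_of_le hu.1]
    exact Icc_subset_Icc le_rfl hu.2
  -- p u - p₀ = ∫₀ᵘ -∇V(q s)
  have hpint : ∀ u ∈ Icc (0:ℝ) T, p u - p₀ = ∫ s in (0:ℝ)..u, -gradient V (q s) := by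
    intro u hu
    have h := intervalIntegral.integral_eq_sub_of_hasDerivAt
      (f := p) (f' := fun s => -gradient V (q s))
      (fun s hs => hp s (hsub u hu hs))
      ((hgqc.neg.mono (hsub u hu)).intervalIntegrable)
    rw [h, hp0]
  -- bound ‖p u - p₀‖ ≤ m * u
  have hpb : ∀ u ∈ Icc (0:ℝ) T, ‖p u - p₀‖ ≤ m * u := by
    intro u hu
    rw [hpint u hu]
    have := intervalIntegral.norm_integral_le_of_norm_le_const
      (C := m) (f := fun s => -gradient V (q s)) (a := 0) (b := u)
      (fun x _ => by simpa using hbound (q x))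
    simpa [abs_of_nonneg hu.1] using this
  -- q u - q₀ - u • p₀ = ∫₀ᵘ (p s - p₀)
  have hqint : ∀ u ∈ Icc (0:ℝ) T, q u - q₀ - u • p₀ = ∫ s in (0:ℝ)..u, (p s - p₀) := by
    intro u hu
    have h1 : ∀ s ∈ uIcc (0:ℝ) u, HasDerivAt (fun r => q r - r • p₀) (p s - p₀) s := by
      intro s hs
      exact (hq s (hsub u hu hs)).sub (by simpa using (hasDerivAt_id s).smul_const p₀)
    have h := intervalIntegral.integral_eq_sub_of_hasDerivAt h1
      (((hpc.mono (hsub u hu)).sub continuousOn_const).intervalIntegrable)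
    rw [h, hq0]
    simp only [zero_smul, sub_zero]
    abel
  -- bound ‖q u - q₀ - u • p₀‖ ≤ m * u² / 2
  have hqb : ∀ u ∈ Icc (0:ℝ) T, ‖q u - q₀ - u • p₀‖ ≤ m * u^2 / 2 := by
    intro u hu
    rw [hqint u hu]
    calc ‖∫ s in (0:ℝ)..u, (p s - p₀)‖
        ≤ ∫ s in (0:ℝ)..u, ‖p s - p₀‖ :=
          intervalIntegral.norm_integral_le_integral_norm hu.1
      _ ≤ ∫ s in (0:ℝ)..u, m * s := by
          apply intervalIntegral.integral_mono_on hu.1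
          · exact (((hpc.mono (hsub u hu)).sub continuousOn_const).norm).intervalIntegrable
          · exact (continuous_const.mul continuous_id).continuousOn.intervalIntegrable
          · intro s hs
            exact hpb s ⟨hs.1, hs.2.trans hu.2⟩
      _ = m * u^2 / 2 := by
          rw [intervalIntegral.integral_const_mul, integral_id]
          ring
  -- first estimate
  have hFb : ∀ u ∈ Icc (0:ℝ) T,
      ‖p u - p₀ + ∫ s in (0:ℝ)..u, g s‖ ≤ m^2 * u^3 / 6 := by
    intro u hu
    have heq : p u - p₀ + ∫ s in (0:ℝ)..u, g s
        = ∫ s in (0:ℝ)..u, (g s - gradient V (q s)) := by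
      rw [hpint u hu, intervalIntegral.integral_sub
        (hgc.continuousOn.intervalIntegrable)
        ((hgqc.mono (hsub u hu)).intervalIntegrable),
        intervalIntegral.integral_neg]
      abel
    rw [heq]
    calc ‖∫ s in (0:ℝ)..u, (g s - gradient V (q s))‖
        ≤ ∫ s in (0:ℝ)..u, ‖g s - gradient V (q s)‖ :=
          intervalIntegral.norm_integral_le_integral_norm hu.1
      _ ≤ ∫ s in (0:ℝ)..u, m * (m * s^2 / 2) := by
          apply intervalIntegral.integral_mono_on hu.1
          · exact ((hgc.continuousOn.sub (hgqc.mono (hsub u hu))).norm).intervalIntegrable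
          · exact (continuous_const.mul ((continuous_const.mul
              (continuous_pow 2)).div_const 2)).continuousOn.intervalIntegrable
          · intro s hs
            have hsT : s ∈ Icc (0:ℝ) T := ⟨hs.1, hs.2.trans hu.2⟩
            have h1 : ‖g s - gradient V (q s)‖ ≤ m * ‖q s - q₀ - s • p₀‖ := by
              have := hlip (q₀ + s • p₀) (q s)
              rw [norm_sub_rev]
              calc ‖gradient V (q s) - gradient V (q₀ + s • p₀)‖
                  ≤ m * ‖q s - (q₀ + s • p₀)‖ := hlip _ _
                _ = m * ‖q s - q₀ - s • p₀‖ := by rw [sub_add_eq_sub_sub]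
            calc ‖g s - gradient V (q s)‖ ≤ m * ‖q s - q₀ - s • p₀‖ := h1
              _ ≤ m * (m * s^2 / 2) := by
                  exact mul_le_mul_of_nonneg_left (hqb s hsT) hm.le
      _ = m^2 * u^3 / 6 := by
          have : (fun s => m * (m * s^2 / 2)) = fun s => (m * m / 2) * s^2 := by
            funext s; ring
          rw [this, intervalIntegral.integral_const_mul, integral_pow]
          ring
  -- FTC derivatives for G and H
  have hGd : ∀ u : ℝ, HasDerivAt (fun r => ∫ s in (0:ℝ)..r, g s) (g u) u :=
    fun u => (hgc.integral_hasStrictDerivAt 0 u).hasDerivAt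
  have hsgc : Continuous (fun s : ℝ => s • g s) := continuous_id.smul hgc
  have hHd : ∀ u : ℝ, HasDerivAt (fun r => ∫ s in (0:ℝ)..r, s • g s) (u • g u) u :=
    fun u => (hsgc.integral_hasStrictDerivAt 0 u).hasDerivAt
  have hGc : Continuous (fun r => ∫ s in (0:ℝ)..r, g s) :=
    continuous_iff_continuousAt.mpr fun u => (hGd u).continuousAt
  -- derivative of the corrected position error
  have hEd : ∀ r ∈ Icc (0:ℝ) T,
      HasDerivAt (fun r => q r - r • p₀ - (∫ s in (0:ℝ)..r, s • g s)
          + r • (∫ s in (0:ℝ)..r, g s))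
        (p r - p₀ + ∫ s in (0:ℝ)..r, g s) r := by
    intro r hr
    have h1 := ((hq r hr).sub ((hasDerivAt_id r).smul_const p₀)).sub (hHd r)
    have h2 := (hasDerivAt_id r).smul (hGd r)
    have h3 := h1.add h2
    refine h3.congr_deriv ?_
    simp only [one_smul, id_eq]
    abel
  intro t ht
  refine ⟨hFb t ht, ?_⟩
  -- rewrite the position error as an integral of the momentum error
  have hsplit : ∫ s in (0:ℝ)..t, (s - t) • g s
      = (∫ s in (0:ℝ)..t, s • g s) - t • (∫ s in (0:ℝ)..t, g s) := by
    have h : ∀ s : ℝ, (s - t) • g s = s • g s - t • g s :=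
      fun s => sub_smul s t (g s)
    simp_rw [h]
    rw [intervalIntegral.integral_sub (g := fun s => t • g s) hsgc.continuousOn.intervalIntegrable
      ((hgc.const_smul t).continuousOn.intervalIntegrable),
      intervalIntegral.integral_smul]
  have hEint : q t - q₀ - t • p₀ - ∫ s in (0:ℝ)..t, (s - t) • g s
      = ∫ s in (0:ℝ)..t, (p s - p₀ + ∫ r in (0:ℝ)..s, g r) := by
    have h := intervalIntegral.integral_eq_sub_of_hasDerivAt
      (fun s hs => hEd s (hsub t ht hs))
      ((((hpc.mono (hsub t ht)).sub continuousOn_const).add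
        hGc.continuousOn).intervalIntegrable)
    rw [h, hq0]
    rw [hsplit]
    simp only [intervalIntegral.integral_same, zero_smul, smul_zero, sub_zero, add_zero]
    abel
  rw [hEint]
  calc ‖∫ s in (0:ℝ)..t, (p s - p₀ + ∫ r in (0:ℝ)..s, g r)‖
      ≤ ∫ s in (0:ℝ)..t, ‖p s - p₀ + ∫ r in (0:ℝ)..s, g r‖ :=
        intervalIntegral.norm_integral_le_integral_norm ht.1
    _ ≤ ∫ s in (0:ℝ)..t, m^2 * s^3 / 6 := by
        apply intervalIntegral.integral_mono_on ht.1
        · exact ((((hpc.mono (hsub t ht)).sub continuousOn_const).add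
            hGc.continuousOn).norm).intervalIntegrable
        · exact ((continuous_const.mul
            (continuous_pow 3)).div_const 6).continuousOn.intervalIntegrable
        · intro s hs
          exact hFb s ⟨hs.1, hs.2.trans ht.2⟩
    _ = m^2 * t^4 / 24 := by
        have h : (fun s : ℝ => m^2 * s^3 / 6) = fun s : ℝ => (m^2/6) * s^3 := by
          funext s; ring
        rw [h, intervalIntegral.integral_const_mul, integral_pow]
        ring
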